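/- Let b be a connected transient graph over (X,m) with bottom of spectrum λ₀ > 0. Fix o ∈ X, a finite set Ω containing o, and let g(x) = G(o,x) be the Green's function and C = sup_{x ∈ ∂Ω} g(x). Then ‖g‖_{ℓ²(X\Ω,m)} ≤ (C/√λ₀)·√cap(Ω); in particular g ∈ ℓ²(X,m). -/

import Mathlib

open scoped ENNReal

/-- The energy form of a weighted graph: `Q(φ) = (1/2) Σ_{x,y} b(x,y)(φ(x) − φ(y))²`. -/
noncomputable def energyForm {X : Type*} (b : X → X → ℝ) (φ : X → ℝ) : ℝ :=
  (1 / 2) * ∑' p : X × X, b p.1 p.2 * (φ p.1 - φ p.2) ^ 2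

/-- The capacity of a finite set `Ω`:
`cap(Ω) = inf {Q(φ) : φ finitely supported, φ = 1 on Ω}`. -/
noncomputable def graphCap {X : Type*} (b : X → X → ℝ) (Ω : Finset X) : ℝ :=
  sInf {q : ℝ | ∃ φ : X → ℝ, (Function.support φ).Finite ∧ (∀ x ∈ Ω, φ x = 1) ∧
    q = energyForm b φ}

open Function

/-- Summability and value of a pair-indexed sum supported on finitely many rows. -/
lemma pair_rows {X : Type*} [DecidableEq X] (F : Finset X) :
    ∀ f : X × X → ℝ, (∀ p : X × X, p.1 ∉ F → f p = 0) →
    (∀ x ∈ F, Summable fun y => f (x, y)) →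
    Summable f ∧ ∑' p, f p = ∑ x ∈ F, ∑' y, f (x, y) := by
  induction F using Finset.induction with
  | empty =>
    intro f h0 _
    have : f = 0 := funext fun p => h0 p (Finset.notMem_empty _)
    subst this
    exact ⟨summable_zero, by simp⟩
  | @insert a s ha ih =>
    intro f h0 hrow
    set f₁ : X × X → ℝ := fun p => if p.1 = a then f p else 0 with hf₁
    set f₂ : X × X → ℝ := fun p => if p.1 = a then 0 else f p with hf₂
    have hsum : ∀ p, f p = f₁ p + f₂ p := by
      intro p; by_cases h : p.1 = a <;> simp [f₁, f₂, h]
    have hi : Function.Injective (fun y : X => ((a, y) : X × X)) := by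
      intro y z h; simpa using congrArg Prod.snd h
    have hvan : ∀ p ∉ Set.range (fun y : X => ((a, y) : X × X)), f₁ p = 0 := by
      rintro ⟨x, y⟩ hp
      have : x ≠ a := by
        intro h; exact hp ⟨y, by simp [h]⟩
      simp [f₁, this]
    have hsupp : Function.support f₁ ⊆ Set.range (fun y : X => ((a, y) : X × X)) := by
      intro p hp
      by_contra h
      exact hp (hvan p h)
    have hrowa : Summable fun y => f (a, y) := hrow a (Finset.mem_insert_self a s)
    have hcomp : (f₁ ∘ fun y : X => ((a, y) : X × X)) = fun y => f (a, y) := by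
      funext y; simp [f₁]
    have hS1 : Summable f₁ := by
      rw [← hi.summable_iff hvan, hcomp]; exact hrowa
    have hT1 : ∑' p, f₁ p = ∑' y, f (a, y) := by
      rw [← hi.tsum_eq hsupp]
      exact tsum_congr fun y => by simp [f₁]
    have h02 : ∀ p : X × X, p.1 ∉ s → f₂ p = 0 := by
      intro p hp
      by_cases h : p.1 = a
      · simp [f₂, h]
      · have : p.1 ∉ insert a s := by simp [h, hp]
        simp [f₂, h, h0 p this]
    have hrow2 : ∀ x ∈ s, Summable fun y => f₂ (x, y) := by
      intro x hx
      have hxa : x ≠ a := fun h => ha (h ▸ hx)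
      have : (fun y => f₂ (x, y)) = fun y => f (x, y) := by funext y; simp [f₂, hxa]
      rw [this]; exact hrow x (Finset.mem_insert_of_mem hx)
    obtain ⟨hS2, hT2⟩ := ih f₂ h02 hrow2
    have hff : f = f₁ + f₂ := funext hsum
    constructor
    · rw [hff]; exact hS1.add hS2
    · calc ∑' p, f p = ∑' p, (f₁ p + f₂ p) := tsum_congr hsum
        _ = ∑' p, f₁ p + ∑' p, f₂ p := Summable.tsum_add hS1 hS2
        _ = ∑' y, f (a, y) + ∑ x ∈ s, ∑' y, f (x, y) := by
            rw [hT1, hT2]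
            congr 1
            refine Finset.sum_congr rfl fun x hx => ?_
            have hxa : x ≠ a := fun h => ha (h ▸ hx)
            exact tsum_congr fun y => by simp [f₂, hxa]
        _ = ∑ x ∈ insert a s, ∑' y, f (x, y) := (Finset.sum_insert (f := fun x => ∑' y, f (x, y)) ha).symm

/-- Column version. -/
lemma pair_cols {X : Type*} [DecidableEq X] (F : Finset X) (f : X × X → ℝ)
    (h0 : ∀ p : X × X, p.2 ∉ F → f p = 0)
    (hcol : ∀ y ∈ F, Summable fun x => f (x, y)) :
    Summable f ∧ ∑' p, f p = ∑ y ∈ F, ∑' x, f (x, y) := by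
  obtain ⟨hS, hT⟩ := pair_rows F (fun p => f (p.2, p.1))
    (fun p hp => h0 (p.2, p.1) hp) (fun x hx => hcol x hx)
  have he : Summable (f ∘ (Equiv.prodComm X X)) := hS
  constructor
  · exact (Equiv.prodComm X X).summable_iff.mp he
  · rw [← (Equiv.prodComm X X).tsum_eq f]
    exact hT

/-- Splitting the graph Laplacian sum. -/
lemma lap_eq {X : Type*} (b : X → X → ℝ) (hb_row : ∀ x, Summable fun y => b x y)
    (u : X → ℝ) (x : X) (hu : Summable fun y => b x y * u y) :
    ∑' y, b x y * (u x - u y) = u x * (∑' y, b x y) - ∑' y, b x y * u y := by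
  have h1 : Summable fun y => b x y * u x := (hb_row x).mul_right (u x)
  calc ∑' y, b x y * (u x - u y) = ∑' y, (b x y * u x - b x y * u y) := by
        exact tsum_congr fun y => by ring
    _ = ∑' y, b x y * u x - ∑' y, b x y * u y := Summable.tsum_sub h1 hu
    _ = u x * (∑' y, b x y) - ∑' y, b x y * u y := by
        rw [tsum_mul_right]; ring

/-- Comparison/minimality: any nonnegative supersolution dominates `g`. -/
lemma green_comparison {X : Type*} [DecidableEq X] (b : X → X → ℝ)
    (hb_nonneg : ∀ x y, 0 ≤ b x y)
    (hb_row : ∀ x, Summable fun y => b x y)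
    (hdeg_pos : ∀ x, 0 < ∑' y, b x y)
    (o : X) (g : X → ℝ)
    (hg_min : ∀ h : X → ℝ, (∀ x, 0 ≤ h x) → (∀ x, Summable fun y => b x y * h y) →
      (∀ x, ∑' y, b x y * (h x - h y) = if x = o then 1 else 0) → ∀ x, g x ≤ h x)
    (h : X → ℝ) (hh0 : ∀ x, 0 ≤ h x) (hhF : ∀ x, Summable fun y => b x y * h y)
    (hsuper : ∀ x, (if x = o then 1 else 0 : ℝ) ≤ ∑' y, b x y * (h x - h y)) :
    ∀ x, g x ≤ h x := by
  classical
  set deg : X → ℝ := fun x => ∑' y, b x y with hdeg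
  set δ : X → ℝ := fun x => if x = o then 1 else 0 with hδ
  have hδ0 : ∀ x, 0 ≤ δ x := by intro x; by_cases hx : x = o <;> simp [δ, hx]
  set T : (X → ℝ) → (X → ℝ) := fun u x => (δ x + ∑' y, b x y * u y) / deg x with hT
  set u : ℕ → X → ℝ := fun n => T^[n] h with hu
  have hu0 : u 0 = h := rfl
  have husucc : ∀ n, u (n + 1) = T (u n) := by
    intro n; simp only [u, Function.iterate_succ_apply']
  -- invariant
  have key : ∀ n, (∀ x, 0 ≤ u n x) ∧ (∀ x, u n x ≤ h x) ∧
      (∀ x, δ x + ∑' y, b x y * u n y ≤ u n x * deg x) := by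
    intro n
    induction n with
    | zero =>
      refine ⟨hh0, fun x => le_refl _, fun x => ?_⟩
      show δ x + ∑' y, b x y * h y ≤ h x * deg x
      have := hsuper x
      rw [lap_eq b hb_row h x (hhF x)] at this
      linarith
    | succ n ih =>
      obtain ⟨h0, hle, hs⟩ := ih
      have hsumn : ∀ x, Summable fun y => b x y * u n y := by
        intro x
        refine Summable.of_nonneg_of_le (fun y => mul_nonneg (hb_nonneg x y) (h0 y))
          (fun y => mul_le_mul_of_nonneg_left (hle y) (hb_nonneg x y)) (hhF x)
      have hdec : ∀ x, u (n + 1) x ≤ u n x := by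
        intro x
        rw [husucc n]
        simp only [T]
        rw [div_le_iff₀ (hdeg_pos x)]
        exact hs x
      have h0' : ∀ x, 0 ≤ u (n + 1) x := by
        intro x
        rw [husucc n]
        refine div_nonneg (add_nonneg (hδ0 x) (tsum_nonneg fun y =>
          mul_nonneg (hb_nonneg x y) (h0 y))) (le_of_lt (hdeg_pos x))
      have hsum1 : ∀ x, Summable fun y => b x y * u (n + 1) y := by
        intro x
        refine Summable.of_nonneg_of_le (fun y => mul_nonneg (hb_nonneg x y) (h0' y))
          (fun y => mul_le_mul_of_nonneg_left ((hdec y).trans (hle y)) (hb_nonneg x y)) (hhF x)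
      refine ⟨h0', fun x => (hdec x).trans (hle x), fun x => ?_⟩
      have heq : u (n + 1) x * deg x = δ x + ∑' y, b x y * u n y := by
        rw [husucc n]
        simp only [T]
        exact div_mul_cancel₀ _ (ne_of_gt (hdeg_pos x))
      rw [heq]
      have : ∑' y, b x y * u (n + 1) y ≤ ∑' y, b x y * u n y := by
        refine Summable.tsum_le_tsum (fun y => mul_le_mul_of_nonneg_left (hdec y) (hb_nonneg x y))
          (hsum1 x) (hsumn x)
      linarith
  have hdec : ∀ n x, u (n + 1) x ≤ u n x := by
    intro n x
    have hs := (key n).2.2 x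
    rw [husucc n]
    simp only [T]
    rw [div_le_iff₀ (hdeg_pos x)]
    exact hs
  have hanti : ∀ x, Antitone fun n => u n x :=
    fun x => antitone_nat_of_succ_le fun n => hdec n x
  have hbdd : ∀ x, BddBelow (Set.range fun n => u n x) := by
    intro x
    exact ⟨0, by rintro r ⟨n, rfl⟩; exact (key n).1 x⟩
  set v : X → ℝ := fun x => ⨅ n, u n x with hv
  have hv0 : ∀ x, 0 ≤ v x := fun x => le_ciInf fun n => (key n).1 x
  have hvle : ∀ n x, v x ≤ u n x := fun n x => ciInf_le (hbdd x) n
  have htend : ∀ x, Filter.Tendsto (fun n => u n x) Filter.atTop (nhds (v x)) :=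
    fun x => tendsto_atTop_ciInf (hanti x) (hbdd x)
  have hsumv : ∀ x, Summable fun y => b x y * v y := by
    intro x
    refine Summable.of_nonneg_of_le (fun y => mul_nonneg (hb_nonneg x y) (hv0 y))
      (fun y => mul_le_mul_of_nonneg_left ((hvle 0 y).trans_eq (congrFun hu0 y)) (hb_nonneg x y))
      (hhF x)
  have hsumn : ∀ n x, Summable fun y => b x y * u n y := by
    intro n x
    refine Summable.of_nonneg_of_le (fun y => mul_nonneg (hb_nonneg x y) ((key n).1 y))
      (fun y => mul_le_mul_of_nonneg_left ((key n).2.1 y) (hb_nonneg x y)) (hhF x)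
  have hfix : ∀ x, v x = (δ x + ∑' y, b x y * v y) / deg x := by
    intro x
    have hL : Filter.Tendsto (fun n => u (n + 1) x) Filter.atTop (nhds (v x)) :=
      (htend x).comp (Filter.tendsto_add_atTop_nat 1)
    have hsums : Filter.Tendsto (fun n => ∑' y, b x y * u n y) Filter.atTop
        (nhds (∑' y, b x y * v y)) := by
      refine tendsto_tsum_of_dominated_convergence (bound := fun y => b x y * h y)
        (hhF x) (fun y => (htend y).const_mul _) ?_
      filter_upwards with n y
      rw [Real.norm_eq_abs, abs_of_nonneg (mul_nonneg (hb_nonneg x y) ((key n).1 y))]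
      exact mul_le_mul_of_nonneg_left ((key n).2.1 y) (hb_nonneg x y)
    have hR : Filter.Tendsto (fun n => (δ x + ∑' y, b x y * u n y) / deg x) Filter.atTop
        (nhds ((δ x + ∑' y, b x y * v y) / deg x)) :=
      (hsums.const_add (δ x)).div_const (deg x)
    have : (fun n => u (n + 1) x) = fun n => (δ x + ∑' y, b x y * u n y) / deg x := by
      funext n; rw [husucc n]
    rw [this] at hL
    exact tendsto_nhds_unique hL hR
  have hveq : ∀ x, ∑' y, b x y * (v x - v y) = δ x := by
    intro x
    rw [lap_eq b hb_row v x (hsumv x)]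
    have hd : deg x ≠ 0 := ne_of_gt (hdeg_pos x)
    have hvd : v x * deg x = δ x + ∑' y, b x y * v y := by
      rw [hfix x]; exact div_mul_cancel₀ _ hd
    rw [hvd]; ring
  have := hg_min v hv0 hsumv hveq
  intro x
  exact (this x).trans ((hvle 0 x).trans_eq (congrFun hu0 x))

section Equil

variable {X : Type*} [DecidableEq X] (b : X → X → ℝ)

/-- One step of the equilibrium-potential iteration on `T` with boundary set `Ω`. -/
noncomputable def eqOp (Ω T : Finset X) (ψ : X → ℝ) : X → ℝ :=
  fun x => if x ∈ Ω then 1 else if x ∈ T then (∑' y, b x y * ψ y) / (∑' y, b x y) else 0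

/-- Iterates of the equilibrium iteration started from the indicator of `Ω`. -/
noncomputable def eqSeq (Ω T : Finset X) : ℕ → X → ℝ :=
  fun n => (eqOp b Ω T)^[n] (fun x => if x ∈ Ω then 1 else 0)

/-- The equilibrium potential of `Ω` relative to the finite set `T`. -/
noncomputable def equil (Ω T : Finset X) : X → ℝ :=
  fun x => ⨆ n, eqSeq b Ω T n x

variable (hb_nonneg : ∀ x y, 0 ≤ b x y) (hb_row : ∀ x, Summable fun y => b x y)
  (hdeg_pos : ∀ x, 0 < ∑' y, b x y)

include hb_nonneg hb_row in
lemma sum_b_mul {ψ : X → ℝ} (h0 : ∀ y, 0 ≤ ψ y) (h1 : ∀ y, ψ y ≤ 1) (x : X) :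
    Summable fun y => b x y * ψ y := by
  refine Summable.of_nonneg_of_le (fun y => mul_nonneg (hb_nonneg x y) (h0 y))
    (fun y => ?_) (hb_row x)
  calc b x y * ψ y ≤ b x y * 1 := mul_le_mul_of_nonneg_left (h1 y) (hb_nonneg x y)
    _ = b x y := mul_one _

include hb_nonneg hb_row hdeg_pos in
lemma eqSeq_bounds (Ω T : Finset X) : ∀ n x, 0 ≤ eqSeq b Ω T n x ∧ eqSeq b Ω T n x ≤ 1 := by
  intro n
  induction n with
  | zero =>
    intro x
    by_cases hx : x ∈ Ω <;> simp [eqSeq, hx]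
  | succ n ih =>
    intro x
    have hstep : eqSeq b Ω T (n + 1) = eqOp b Ω T (eqSeq b Ω T n) := by
      simp only [eqSeq, Function.iterate_succ_apply']
    rw [hstep]
    unfold eqOp
    by_cases hx : x ∈ Ω
    · simp [hx]
    · by_cases hx' : x ∈ T
      · simp only [hx, hx', if_false, if_true]
        have hsum : Summable fun y => b x y * eqSeq b Ω T n y :=
          sum_b_mul b hb_nonneg hb_row (fun y => (ih y).1) (fun y => (ih y).2) x
        constructor
        · exact div_nonneg (tsum_nonneg fun y => mul_nonneg (hb_nonneg x y) ((ih y).1))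
            (le_of_lt (hdeg_pos x))
        · rw [div_le_one (hdeg_pos x)]
          refine Summable.tsum_le_tsum (fun y => ?_) hsum (hb_row x)
          calc b x y * eqSeq b Ω T n y ≤ b x y * 1 :=
              mul_le_mul_of_nonneg_left ((ih y).2) (hb_nonneg x y)
            _ = b x y := mul_one _
      · simp [hx, hx']

include hb_nonneg hb_row hdeg_pos in
lemma eqOp_mono (Ω : Finset X) {T T' : Finset X} (hTT' : T ⊆ T') {ψ ψ' : X → ℝ}
    (h0 : ∀ y, 0 ≤ ψ y) (h1 : ∀ y, ψ y ≤ 1) (h0' : ∀ y, 0 ≤ ψ' y) (h1' : ∀ y, ψ' y ≤ 1)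
    (hle : ∀ y, ψ y ≤ ψ' y) : ∀ x, eqOp b Ω T ψ x ≤ eqOp b Ω T' ψ' x := by
  intro x
  unfold eqOp
  by_cases hx : x ∈ Ω
  · simp [hx]
  · simp only [hx, if_false]
    by_cases hx' : x ∈ T
    · have hx'' : x ∈ T' := hTT' hx'
      simp only [hx', hx'', if_true]
      refine div_le_div_of_nonneg_right ?_ (hdeg_pos x).le
      exact Summable.tsum_le_tsum (fun y => mul_le_mul_of_nonneg_left (hle y) (hb_nonneg x y))
        (sum_b_mul b hb_nonneg hb_row h0 h1 x) (sum_b_mul b hb_nonneg hb_row h0' h1' x)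
    · simp only [hx', if_false]
      by_cases hx'' : x ∈ T'
      · simp only [hx'', if_true]
        exact div_nonneg (tsum_nonneg fun y => mul_nonneg (hb_nonneg x y) (h0' y))
          (le_of_lt (hdeg_pos x))
      · simp [hx'']

include hb_nonneg hb_row hdeg_pos in
lemma eqSeq_mono_n (Ω T : Finset X) : ∀ n x, eqSeq b Ω T n x ≤ eqSeq b Ω T (n + 1) x := by
  intro n
  induction n with
  | zero =>
    intro x
    by_cases hx : x ∈ Ω
    · have h1 : eqSeq b Ω T 0 x = 1 := by simp [eqSeq, hx]
      have h2 : eqSeq b Ω T 1 x = 1 := by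
        simp only [eqSeq, Function.iterate_one]
        unfold eqOp
        simp [hx]
      rw [h1, h2]
    · have h1 : eqSeq b Ω T 0 x = 0 := by simp [eqSeq, hx]
      rw [h1]
      exact (eqSeq_bounds b hb_nonneg hb_row hdeg_pos Ω T 1 x).1
  | succ n ih =>
    intro x
    have hstep : ∀ k, eqSeq b Ω T (k + 1) = eqOp b Ω T (eqSeq b Ω T k) := by
      intro k; simp only [eqSeq, Function.iterate_succ_apply']
    rw [hstep n, hstep (n + 1)]
    exact eqOp_mono b hb_nonneg hb_row hdeg_pos Ω (Finset.Subset.refl T)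
      (fun y => (eqSeq_bounds b hb_nonneg hb_row hdeg_pos Ω T n y).1)
      (fun y => (eqSeq_bounds b hb_nonneg hb_row hdeg_pos Ω T n y).2)
      (fun y => (eqSeq_bounds b hb_nonneg hb_row hdeg_pos Ω T (n + 1) y).1)
      (fun y => (eqSeq_bounds b hb_nonneg hb_row hdeg_pos Ω T (n + 1) y).2)
      ih x

include hb_nonneg hb_row hdeg_pos in
lemma eqSeq_mono_T (Ω : Finset X) {T T' : Finset X} (hTT' : T ⊆ T') :
    ∀ n x, eqSeq b Ω T n x ≤ eqSeq b Ω T' n x := by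
  intro n
  induction n with
  | zero => intro x; exact le_refl _
  | succ n ih =>
    have hstep : ∀ (S : Finset X) k, eqSeq b Ω S (k + 1) = eqOp b Ω S (eqSeq b Ω S k) := by
      intro S k; simp only [eqSeq, Function.iterate_succ_apply']
    intro x
    rw [hstep T n, hstep T' n]
    exact eqOp_mono b hb_nonneg hb_row hdeg_pos Ω hTT'
      (fun y => (eqSeq_bounds b hb_nonneg hb_row hdeg_pos Ω T n y).1)
      (fun y => (eqSeq_bounds b hb_nonneg hb_row hdeg_pos Ω T n y).2)
      (fun y => (eqSeq_bounds b hb_nonneg hb_row hdeg_pos Ω T' n y).1)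
      (fun y => (eqSeq_bounds b hb_nonneg hb_row hdeg_pos Ω T' n y).2)
      ih x

include hb_nonneg hb_row hdeg_pos in
lemma equil_bdd (Ω T : Finset X) (x : X) :
    BddAbove (Set.range fun n => eqSeq b Ω T n x) := by
  exact ⟨1, by rintro r ⟨n, rfl⟩; exact (eqSeq_bounds b hb_nonneg hb_row hdeg_pos Ω T n x).2⟩

include hb_nonneg hb_row hdeg_pos in
lemma equil_nonneg (Ω T : Finset X) (x : X) : 0 ≤ equil b Ω T x :=
  le_trans (eqSeq_bounds b hb_nonneg hb_row hdeg_pos Ω T 0 x).1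
    (le_ciSup (equil_bdd b hb_nonneg hb_row hdeg_pos Ω T x) 0)

include hb_nonneg hb_row hdeg_pos in
lemma equil_le_one (Ω T : Finset X) (x : X) : equil b Ω T x ≤ 1 :=
  ciSup_le fun n => (eqSeq_bounds b hb_nonneg hb_row hdeg_pos Ω T n x).2

lemma eqSeq_of_mem (Ω T : Finset X) {x : X} (hx : x ∈ Ω) : ∀ n, eqSeq b Ω T n x = 1 := by
  intro n
  cases n with
  | zero => simp [eqSeq, hx]
  | succ n =>
    have : eqSeq b Ω T (n + 1) = eqOp b Ω T (eqSeq b Ω T n) := by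
      simp only [eqSeq, Function.iterate_succ_apply']
    rw [this]; unfold eqOp; simp [hx]

lemma equil_of_mem (Ω T : Finset X) {x : X} (hx : x ∈ Ω) : equil b Ω T x = 1 := by
  unfold equil
  rw [show (fun n => eqSeq b Ω T n x) = fun _ => (1 : ℝ) from
    funext fun n => eqSeq_of_mem b Ω T hx n]
  exact ciSup_const

lemma eqSeq_of_not_mem (Ω T : Finset X) {x : X} (hx : x ∉ Ω) (hx' : x ∉ T) :
    ∀ n, eqSeq b Ω T n x = 0 := by
  intro n
  cases n with
  | zero => simp [eqSeq, hx]
  | succ n =>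
    have : eqSeq b Ω T (n + 1) = eqOp b Ω T (eqSeq b Ω T n) := by
      simp only [eqSeq, Function.iterate_succ_apply']
    rw [this]; unfold eqOp; simp [hx, hx']

lemma equil_of_not_mem (Ω T : Finset X) {x : X} (hx : x ∉ Ω) (hx' : x ∉ T) :
    equil b Ω T x = 0 := by
  unfold equil
  rw [show (fun n => eqSeq b Ω T n x) = fun _ => (0 : ℝ) from
    funext fun n => eqSeq_of_not_mem b Ω T hx hx' n]
  exact ciSup_const

include hb_nonneg hb_row hdeg_pos in
lemma equil_tendsto (Ω T : Finset X) (x : X) :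
    Filter.Tendsto (fun n => eqSeq b Ω T n x) Filter.atTop (nhds (equil b Ω T x)) :=
  tendsto_atTop_ciSup (monotone_nat_of_le_succ fun n => eqSeq_mono_n b hb_nonneg hb_row hdeg_pos Ω T n x)
    (equil_bdd b hb_nonneg hb_row hdeg_pos Ω T x)

include hb_nonneg hb_row hdeg_pos in
lemma equil_fix (Ω T : Finset X) {x : X} (hx : x ∉ Ω) (hx' : x ∈ T) :
    equil b Ω T x * (∑' y, b x y) = ∑' y, b x y * equil b Ω T y := by
  have hstep : ∀ k, eqSeq b Ω T (k + 1) x =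
      (∑' y, b x y * eqSeq b Ω T k y) / (∑' y, b x y) := by
    intro k
    have : eqSeq b Ω T (k + 1) = eqOp b Ω T (eqSeq b Ω T k) := by
      simp only [eqSeq, Function.iterate_succ_apply']
    rw [this]; unfold eqOp; simp [hx, hx']
  have hL : Filter.Tendsto (fun n => eqSeq b Ω T (n + 1) x) Filter.atTop
      (nhds (equil b Ω T x)) :=
    (equil_tendsto b hb_nonneg hb_row hdeg_pos Ω T x).comp (Filter.tendsto_add_atTop_nat 1)
  have hsums : Filter.Tendsto (fun n => ∑' y, b x y * eqSeq b Ω T n y) Filter.atTop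
      (nhds (∑' y, b x y * equil b Ω T y)) := by
    refine tendsto_tsum_of_dominated_convergence (bound := fun y => b x y) (hb_row x)
      (fun y => (equil_tendsto b hb_nonneg hb_row hdeg_pos Ω T y).const_mul _) ?_
    filter_upwards with n y
    rw [Real.norm_eq_abs, abs_of_nonneg (mul_nonneg (hb_nonneg x y)
      ((eqSeq_bounds b hb_nonneg hb_row hdeg_pos Ω T n y).1))]
    calc b x y * eqSeq b Ω T n y ≤ b x y * 1 :=
        mul_le_mul_of_nonneg_left ((eqSeq_bounds b hb_nonneg hb_row hdeg_pos Ω T n y).2)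
          (hb_nonneg x y)
      _ = b x y := mul_one _
  have hR : Filter.Tendsto (fun n => (∑' y, b x y * eqSeq b Ω T n y) / (∑' y, b x y))
      Filter.atTop (nhds ((∑' y, b x y * equil b Ω T y) / (∑' y, b x y))) :=
    hsums.div_const _
  have heq : equil b Ω T x = (∑' y, b x y * equil b Ω T y) / (∑' y, b x y) := by
    refine tendsto_nhds_unique ?_ hR
    have : (fun n => eqSeq b Ω T (n + 1) x) =
        fun n => (∑' y, b x y * eqSeq b Ω T n y) / (∑' y, b x y) := funext hstep
    rw [← this]
    exact hL
  rw [heq]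
  exact div_mul_cancel₀ _ (ne_of_gt (hdeg_pos x))

include hb_nonneg hb_row hdeg_pos in
lemma equil_mono_T (Ω : Finset X) {T T' : Finset X} (hTT' : T ⊆ T') (x : X) :
    equil b Ω T x ≤ equil b Ω T' x :=
  ciSup_le fun n => le_trans (eqSeq_mono_T b hb_nonneg hb_row hdeg_pos Ω hTT' n x)
    (le_ciSup (equil_bdd b hb_nonneg hb_row hdeg_pos Ω T' x) n)

lemma equil_supp (Ω T : Finset X) :
    Function.support (equil b Ω T) ⊆ ↑(Ω ∪ T) := by
  intro x hx
  by_contra h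
  simp only [Finset.coe_union, Set.mem_union, Finset.mem_coe, not_or] at h
  exact hx (equil_of_not_mem b Ω T h.1 h.2)

end Equil

lemma abs_mul_le_half (a c : ℝ) : |a| * |c| ≤ (a ^ 2 + c ^ 2) / 2 := by
  nlinarith [sq_nonneg (|a| - |c|), sq_abs a, sq_abs c]

/-- Pair summability of the energy integrand for finitely supported functions. -/
lemma summable_pair_energy {X : Type*} [DecidableEq X] (b : X → X → ℝ)
    (hb_nonneg : ∀ x y, 0 ≤ b x y) (hb_symm : ∀ x y, b x y = b y x)
    (hb_row : ∀ x, Summable fun y => b x y)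
    (S : Finset X) (u : X → ℝ) (hu : ∀ x ∉ S, u x = 0) :
    Summable fun p : X × X => b p.1 p.2 * (u p.1 - u p.2) ^ 2 := by
  classical
  set M : ℝ := ∑ x ∈ S, |u x| with hM
  have hM0 : 0 ≤ M := Finset.sum_nonneg fun x _ => abs_nonneg _
  have hMb : ∀ x, |u x| ≤ M := by
    intro x
    by_cases hx : x ∈ S
    · exact Finset.single_le_sum (fun y _ => abs_nonneg (u y)) hx
    · rw [hu x hx]; simpa using hM0
  set c : ℝ := (2 * M) ^ 2 with hc
  have hc0 : 0 ≤ c := sq_nonneg _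
  set h1 : X × X → ℝ := fun p => if p.1 ∈ S then b p.1 p.2 * c else 0 with hh1
  set h2 : X × X → ℝ := fun p =>
    if p.1 ∈ S then 0 else if p.2 ∈ S then b p.1 p.2 * c else 0 with hh2
  have hS1 : Summable h1 := by
    refine (pair_rows S h1 (fun p hp => by simp [h1, hp]) (fun x hx => ?_)).1
    have : (fun y => h1 (x, y)) = fun y => b x y * c := by
      funext y; simp [h1, hx]
    rw [this]
    exact (hb_row x).mul_right c
  have hS2 : Summable h2 := by
    refine (pair_cols S h2 (fun p hp => ?_) (fun y hy => ?_)).1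
    · by_cases h : p.1 ∈ S <;> simp [h2, h, hp]
    · refine Summable.of_nonneg_of_le (fun x => ?_) (fun x => ?_)
        ((hb_row y).mul_right c)
      · by_cases h : x ∈ S
        · simp [h2, h]
        · simp only [h2, h, hy, if_false, if_true]
          exact mul_nonneg (hb_nonneg x y) hc0
      · by_cases h : x ∈ S
        · simp only [h2, h, if_true]
          exact mul_nonneg (hb_nonneg y x) hc0
        · simp only [h2, h, hy, if_false, if_true]
          rw [hb_symm x y]
  refine Summable.of_nonneg_of_le (fun p => ?_) (fun p => ?_) (hS1.add hS2)
  · exact mul_nonneg (hb_nonneg _ _) (sq_nonneg _)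
  · rcases p with ⟨x, y⟩
    by_cases hx : x ∈ S
    · have : h1 (x, y) = b x y * c := by simp [h1, hx]
      have h2z : h2 (x, y) = 0 := by simp [h2, hx]
      simp only [Pi.add_apply, this, h2z, add_zero]
      refine mul_le_mul_of_nonneg_left ?_ (hb_nonneg x y)
      have : |u x - u y| ≤ 2 * M := by
        calc |u x - u y| ≤ |u x| + |u y| := abs_sub _ _
          _ ≤ M + M := add_le_add (hMb x) (hMb y)
          _ = 2 * M := by ring
      calc (u x - u y) ^ 2 = |u x - u y| ^ 2 := (sq_abs _).symm
        _ ≤ (2 * M) ^ 2 := by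
            exact pow_le_pow_left₀ (abs_nonneg _) this 2
    · by_cases hy : y ∈ S
      · have e1 : h1 (x, y) = 0 := by simp [h1, hx]
        have e2 : h2 (x, y) = b x y * c := by simp [h2, hx, hy]
        simp only [Pi.add_apply, e1, e2, zero_add]
        refine mul_le_mul_of_nonneg_left ?_ (hb_nonneg x y)
        have : |u x - u y| ≤ 2 * M := by
          calc |u x - u y| ≤ |u x| + |u y| := abs_sub _ _
            _ ≤ M + M := add_le_add (hMb x) (hMb y)
            _ = 2 * M := by ring
        calc (u x - u y) ^ 2 = |u x - u y| ^ 2 := (sq_abs _).symm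
          _ ≤ (2 * M) ^ 2 := pow_le_pow_left₀ (abs_nonneg _) this 2
      · have e1 : h1 (x, y) = 0 := by simp [h1, hx]
        have e2 : h2 (x, y) = 0 := by simp [h2, hx, hy]
        simp only [Pi.add_apply, e1, e2, add_zero]
        rw [hu x hx, hu y hy]
        simp

/-- The equilibrium potential minimizes the energy among admissible functions supported in `T`. -/
lemma equil_energy_le {X : Type*} [DecidableEq X] (b : X → X → ℝ)
    (hb_nonneg : ∀ x y, 0 ≤ b x y) (hb_symm : ∀ x y, b x y = b y x)
    (hb_row : ∀ x, Summable fun y => b x y) (hdeg_pos : ∀ x, 0 < ∑' y, b x y)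
    (Ω T : Finset X) (hΩT : Ω ⊆ T)
    (φ : X → ℝ) (hφsupp : ∀ x ∉ T, φ x = 0) (hφΩ : ∀ x ∈ Ω, φ x = 1) :
    energyForm b (equil b Ω T) ≤ energyForm b φ := by
  classical
  set e : X → ℝ := equil b Ω T with he
  have he0 : ∀ x, 0 ≤ e x := equil_nonneg b hb_nonneg hb_row hdeg_pos Ω T
  have he1 : ∀ x, e x ≤ 1 := equil_le_one b hb_nonneg hb_row hdeg_pos Ω T
  have hesupp : ∀ x ∉ T, e x = 0 := fun x hx =>
    equil_of_not_mem b Ω T (fun h => hx (hΩT h)) hx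
  set w : X → ℝ := fun x => φ x - e x with hw
  set F : Finset X := T \ Ω with hF
  have hwsupp : ∀ x ∉ F, w x = 0 := by
    intro x hx
    simp only [hF, Finset.mem_sdiff, not_and, not_not] at hx
    by_cases hxT : x ∈ T
    · have hxΩ : x ∈ Ω := hx hxT
      simp [w, hφΩ x hxΩ, he, equil_of_mem b Ω T hxΩ]
    · simp [w, hφsupp x hxT, hesupp x hxT]
  have hwsupp' : ∀ x ∉ T, w x = 0 := fun x hx =>
    hwsupp x (fun h => hx (Finset.mem_sdiff.mp h).1)
  -- summability of the three energy integrands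
  have hSe : Summable fun p : X × X => b p.1 p.2 * (e p.1 - e p.2) ^ 2 :=
    summable_pair_energy b hb_nonneg hb_symm hb_row T e hesupp
  have hSw : Summable fun p : X × X => b p.1 p.2 * (w p.1 - w p.2) ^ 2 :=
    summable_pair_energy b hb_nonneg hb_symm hb_row F w hwsupp
  set cross : X × X → ℝ :=
    fun p => b p.1 p.2 * (e p.1 - e p.2) * (w p.1 - w p.2) with hcross
  have hScross : Summable cross := by
    refine Summable.of_abs (Summable.of_nonneg_of_le (fun p => abs_nonneg _)
      (fun p => ?_) (((hSe.add hSw)).mul_left (1/2)))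
    rcases p with ⟨x, y⟩
    simp only [cross, Pi.add_apply]
    rw [abs_mul, abs_mul, abs_of_nonneg (hb_nonneg x y)]
    have h1 : |e x - e y| * |w x - w y| ≤ ((e x - e y) ^ 2 + (w x - w y) ^ 2) / 2 :=
      abs_mul_le_half _ _
    calc b x y * |e x - e y| * |w x - w y| = b x y * (|e x - e y| * |w x - w y|) := by ring
      _ ≤ b x y * (((e x - e y) ^ 2 + (w x - w y) ^ 2) / 2) :=
          mul_le_mul_of_nonneg_left h1 (hb_nonneg x y)
      _ = 1/2 * (b x y * (e x - e y) ^ 2 + b x y * (w x - w y) ^ 2) := by ring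
  -- the cross term vanishes
  have hlapzero : ∀ x ∈ F, ∑' y, b x y * (e x - e y) = 0 := by
    intro x hx
    rw [Finset.mem_sdiff] at hx
    rw [lap_eq b hb_row e x (sum_b_mul b hb_nonneg hb_row he0 he1 x)]
    have := equil_fix b hb_nonneg hb_row hdeg_pos Ω T hx.2 hx.1
    rw [← he] at this
    linarith
  set f1 : X × X → ℝ := fun p => b p.1 p.2 * (e p.1 - e p.2) * w p.1 with hf1
  set f2 : X × X → ℝ := fun p => b p.1 p.2 * (e p.1 - e p.2) * w p.2 with hf2
  have hrows1 : ∀ x ∈ F, Summable fun y => f1 (x, y) := by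
    intro x _
    have : (fun y => f1 (x, y)) = fun y => (b x y * e x - b x y * e y) * w x := by
      funext y; simp only [f1]; ring
    rw [this]
    exact (((hb_row x).mul_right (e x)).sub
      (sum_b_mul b hb_nonneg hb_row he0 he1 x)).mul_right (w x)
  obtain ⟨hSf1, hTf1⟩ := pair_rows F f1
    (fun p hp => by simp [f1, hwsupp p.1 hp]) hrows1
  have hTf1z : ∑' p, f1 p = 0 := by
    rw [hTf1]
    refine Finset.sum_eq_zero fun x hx => ?_
    have : (fun y => f1 (x, y)) = fun y => b x y * (e x - e y) * w x := rfl
    calc ∑' y, f1 (x, y) = ∑' y, b x y * (e x - e y) * w x := by rw [this]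
      _ = (∑' y, b x y * (e x - e y)) * w x := tsum_mul_right
      _ = 0 := by rw [hlapzero x hx]; ring
  have hcols2 : ∀ y ∈ F, Summable fun x => f2 (x, y) := by
    intro y _
    have : (fun x => f2 (x, y)) = fun x => (b y x * e x - b y x * e y) * w y := by
      funext x; simp only [f2]; rw [hb_symm x y]; ring
    rw [this]
    exact ((sum_b_mul b hb_nonneg hb_row he0 he1 y).sub
      ((hb_row y).mul_right (e y))).mul_right (w y)
  obtain ⟨hSf2, hTf2⟩ := pair_cols F f2
    (fun p hp => by simp [f2, hwsupp p.2 hp]) hcols2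
  have hTf2z : ∑' p, f2 p = 0 := by
    rw [hTf2]
    refine Finset.sum_eq_zero fun y hy => ?_
    calc ∑' x, f2 (x, y) = ∑' x, (-(b y x * (e y - e x))) * w y := by
          refine tsum_congr fun x => ?_
          simp only [f2]; rw [hb_symm x y]; ring
      _ = (∑' x, -(b y x * (e y - e x))) * w y := tsum_mul_right
      _ = (-(∑' x, b y x * (e y - e x))) * w y := by
          rw [tsum_neg]
      _ = 0 := by rw [hlapzero y hy]; ring
  have hcrosszero : ∑' p, cross p = 0 := by
    have hptw : ∀ p : X × X, cross p = f1 p - f2 p := by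
      intro p; simp only [cross, f1, f2]; ring
    calc ∑' p, cross p = ∑' p, (f1 p - f2 p) := tsum_congr hptw
      _ = ∑' p, f1 p - ∑' p, f2 p := Summable.tsum_sub hSf1 hSf2
      _ = 0 := by rw [hTf1z, hTf2z]; ring
  -- decomposition of the energy
  have hdecomp : ∑' p : X × X, b p.1 p.2 * (φ p.1 - φ p.2) ^ 2 =
      (∑' p : X × X, b p.1 p.2 * (e p.1 - e p.2) ^ 2) +
      (∑' p : X × X, b p.1 p.2 * (w p.1 - w p.2) ^ 2) + 2 * ∑' p, cross p := by
    have hptw : ∀ p : X × X, b p.1 p.2 * (φ p.1 - φ p.2) ^ 2 =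
        b p.1 p.2 * (e p.1 - e p.2) ^ 2 + b p.1 p.2 * (w p.1 - w p.2) ^ 2 +
        2 * cross p := by
      intro p
      have hφ1 : φ p.1 = e p.1 + w p.1 := by simp [w]
      have hφ2 : φ p.2 = e p.2 + w p.2 := by simp [w]
      rw [hφ1, hφ2]; simp only [cross]; ring
    calc ∑' p : X × X, b p.1 p.2 * (φ p.1 - φ p.2) ^ 2
        = ∑' p : X × X, (b p.1 p.2 * (e p.1 - e p.2) ^ 2 +
            b p.1 p.2 * (w p.1 - w p.2) ^ 2 + 2 * cross p) := tsum_congr hptw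
      _ = (∑' p : X × X, (b p.1 p.2 * (e p.1 - e p.2) ^ 2 +
            b p.1 p.2 * (w p.1 - w p.2) ^ 2)) + ∑' p, 2 * cross p :=
          Summable.tsum_add (hSe.add hSw) (hScross.mul_left 2)
      _ = (∑' p : X × X, b p.1 p.2 * (e p.1 - e p.2) ^ 2) +
          (∑' p : X × X, b p.1 p.2 * (w p.1 - w p.2) ^ 2) + 2 * ∑' p, cross p := by
          rw [Summable.tsum_add hSe hSw, tsum_mul_left]
  unfold energyForm
  rw [hdecomp, hcrosszero]
  have hwnn : 0 ≤ ∑' p : X × X, b p.1 p.2 * (w p.1 - w p.2) ^ 2 :=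
    tsum_nonneg fun p => mul_nonneg (hb_nonneg _ _) (sq_nonneg _)
  nlinarith

/-- The support of a summable nonnegative real family is countable. -/
lemma countable_support_of_summable {X : Type*} {f : X → ℝ} (h0 : ∀ x, 0 ≤ f x)
    (hf : Summable f) : (Function.support f).Countable := by
  have hs : Summable fun x => (⟨f x, h0 x⟩ : NNReal) := (NNReal.summable_mk h0).mpr hf
  have := hs.countable_support_nnreal
  have hsupp : Function.support (fun x => (⟨f x, h0 x⟩ : NNReal)) = Function.support f := by
    ext x
    simp only [Function.mem_support, Ne]
    constructor
    · intro h hc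
      exact h (by ext; simp [hc])
    · intro h hc
      exact h (congrArg NNReal.toReal hc)
  convert this using 1; exact hsupp.symm

/-- A connected summable graph lives on a countable vertex set. -/
lemma exists_enum {X : Type*} (b : X → X → ℝ) (hb_nonneg : ∀ x y, 0 ≤ b x y)
    (hb_row : ∀ x, Summable fun y => b x y) (o : X)
    (hconn : ∀ x y : X, ∃ (k : ℕ) (γ : ℕ → X), γ 0 = x ∧ γ k = y ∧
      ∀ i < k, 0 < b (γ i) (γ (i + 1))) :
    ∃ f : ℕ → X, Function.Surjective f := by
  let reach : ℕ → Set X := fun n => Nat.rec {o}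
    (fun _ R => R ∪ ⋃ x ∈ R, Function.support (b x)) n
  have hreach_succ : ∀ n, reach (n + 1) = reach n ∪ ⋃ x ∈ reach n, Function.support (b x) :=
    fun n => rfl
  have hcnt : ∀ n, (reach n).Countable := by
    intro n
    induction n with
    | zero => exact Set.countable_singleton o
    | succ n ih =>
      rw [hreach_succ]
      refine ih.union (Set.Countable.biUnion ih fun x _ => ?_)
      exact countable_support_of_summable (hb_nonneg x) (hb_row x)
  have hcover : ∀ x : X, ∃ n, x ∈ reach n := by
    intro x
    obtain ⟨k, γ, hγ0, hγk, hpos⟩ := hconn o x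
    have : ∀ i, i ≤ k → γ i ∈ reach i := by
      intro i
      induction i with
      | zero => intro _; rw [hγ0]; exact Set.mem_singleton o
      | succ i ih =>
        intro hik
        have hi : γ i ∈ reach i := ih (le_of_lt (Nat.lt_of_succ_le hik))
        rw [hreach_succ]
        refine Set.mem_union_right _ ?_
        refine Set.mem_biUnion hi ?_
        exact ne_of_gt (hpos i (Nat.lt_of_succ_le hik))
    exact ⟨k, hγk ▸ this k (le_refl k)⟩
  have : (Set.univ : Set X).Countable := by
    refine Set.Countable.mono ?_ (Set.countable_iUnion hcnt)
    intro x _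
    obtain ⟨n, hn⟩ := hcover x
    exact Set.mem_iUnion.mpr ⟨n, hn⟩
  have : Countable X := Set.countable_univ_iff.mp this
  have : Nonempty X := ⟨o⟩
  exact exists_surjective_nat X

/-- Let `b` be a connected transient graph over `(X, m)` with positive
bottom of the spectrum `λ₀ > 0`.  Fix `o ∈ X`, a finite set `Ω` containing `o`, let
`g = G(o, ·)` be the (minimal positive) Green's function and `C = sup_{∂Ω} g`.  Then
`‖g‖²_{ℓ²(X∖Ω,m)} ≤ (C²/λ₀)·cap(Ω)`; in particular `g ∈ ℓ²(X, m)`. -/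
theorem greens_function_l2_bound
    {X : Type*} [DecidableEq X]
    (b : X → X → ℝ) (m : X → ℝ)
    (hb_nonneg : ∀ x y, 0 ≤ b x y)
    (hb_symm : ∀ x y, b x y = b y x)
    (hb_diag : ∀ x, b x x = 0)
    (hb_row : ∀ x, Summable fun y => b x y)
    (hm_pos : ∀ x, 0 < m x)
    -- connectivity
    (hconn : ∀ x y : X, ∃ (k : ℕ) (γ : ℕ → X), γ 0 = x ∧ γ k = y ∧
      ∀ i < k, 0 < b (γ i) (γ (i + 1)))
    -- positive bottom of the spectrum
    (lam : ℝ) (hlam_pos : 0 < lam)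
    (hlam : ∀ φ : X → ℝ, (Function.support φ).Finite →
      lam * ∑' x, φ x ^ 2 * m x ≤ energyForm b φ)
    (o : X) (Ω : Finset X) (hoΩ : o ∈ Ω)
    -- `g` is the Green's function with pole `o`: the minimal nonnegative solution of
    -- `L g = 𝟙_o / m(o)`
    (g : X → ℝ)
    (hg_nonneg : ∀ x, 0 ≤ g x)
    (hgF : ∀ x, Summable fun y => b x y * g y)
    (hg_eq : ∀ x, ∑' y, b x y * (g x - g y) = if x = o then 1 else 0)
    (hg_min : ∀ h : X → ℝ, (∀ x, 0 ≤ h x) → (∀ x, Summable fun y => b x y * h y) →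
      (∀ x, ∑' y, b x y * (h x - h y) = if x = o then 1 else 0) → ∀ x, g x ≤ h x)
    -- `C` is the supremum of `g` on the boundary `∂Ω` (attained, as `Ω` is finite)
    (C : ℝ)
    (hC_bound : ∀ x ∈ Ω, (∃ y, 0 < b x y ∧ y ∉ Ω) → g x ≤ C)
    (hC_mem : ∃ x ∈ Ω, (∃ y, 0 < b x y ∧ y ∉ Ω) ∧ g x = C) :
    (∑' x : X, ENNReal.ofReal (if x ∈ Ω then 0 else g x ^ 2 * m x)) ≤
        ENNReal.ofReal (C ^ 2 / lam * graphCap b Ω) ∧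
      Summable fun x => g x ^ 2 * m x := by
  classical
  -- degree positivity
  have hdeg_pos : ∀ x, 0 < ∑' y, b x y := by
    intro x
    rcases lt_or_eq_of_le (tsum_nonneg fun y => hb_nonneg x y) with h | h
    · exact h
    exfalso
    have hz : ∀ y, b x y = 0 := by
      intro y
      have h1 : b x y ≤ ∑' y, b x y := Summable.le_tsum (hb_row x) y (fun z _ => hb_nonneg x z)
      have h2 := hb_nonneg x y
      linarith [h.symm]
    by_cases hx : x = o
    · subst hx
      have := hg_eq x
      simp only [if_pos rfl] at this
      rw [show (fun y => b x y * (g x - g y)) = fun _ => (0 : ℝ) from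
        funext fun y => by rw [hz y]; ring] at this
      simp at this
    · obtain ⟨k, γ, hγ0, hγk, hpos⟩ := hconn x o
      cases k with
      | zero => exact hx (hγ0 ▸ hγk)
      | succ k =>
        have := hpos 0 (Nat.succ_pos k)
        rw [hγ0] at this
        rw [hz (γ 1)] at this
        exact lt_irrefl 0 this
  -- C is nonnegative
  obtain ⟨x0, hx0Ω, hx0b, hx0C⟩ := hC_mem
  have hC0 : 0 ≤ C := hx0C ▸ hg_nonneg x0
  -- enumeration of X
  obtain ⟨enum, henum⟩ := exists_enum b hb_nonneg hb_row o hconn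
  -- summability of Laplacian-type rows for g
  have hbg : ∀ x, Summable fun y => b x y * (g x - g y) := by
    intro x
    exact Summable.congr (((hb_row x).mul_right (g x)).sub (hgF x)) fun y => by ring
  -- capacity set
  set capset : Set ℝ := {q : ℝ | ∃ φ : X → ℝ, (Function.support φ).Finite ∧
    (∀ x ∈ Ω, φ x = 1) ∧ q = energyForm b φ} with hcapset
  have hcap_def : graphCap b Ω = sInf capset := rfl
  have hcap_ne : capset.Nonempty := by
    refine ⟨energyForm b (fun x => if x ∈ Ω then 1 else 0),
      fun x => if x ∈ Ω then 1 else 0, ?_, fun x hx => by simp [hx], rfl⟩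
    refine Set.Finite.subset Ω.finite_toSet ?_
    intro x hx
    simp only [Function.mem_support, Finset.mem_coe] at hx ⊢
    by_contra h
    exact hx (if_neg h)
  -- the key finite-sum bound, for each admissible φ
  have key : ∀ q ∈ capset, ∀ s : Finset X,
      (∑ x ∈ s, if x ∈ Ω then 0 else g x ^ 2 * m x) ≤ C ^ 2 / lam * q := by
    rintro q ⟨φ, hφfin, hφΩ, rfl⟩ s
    set S : Finset X := hφfin.toFinset with hS
    set T : ℕ → Finset X := fun n => (S ∪ Ω) ∪ Finset.image enum (Finset.range (n + 1))
      with hT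
    have hTsub : ∀ {a c : ℕ}, a ≤ c → T a ⊆ T c := by
      intro a c hac
      exact Finset.union_subset_union (Finset.Subset.refl _)
        (Finset.image_subset_image (Finset.range_subset_range.mpr (by omega)))
    have hΩT : ∀ n, Ω ⊆ T n := fun n =>
      Finset.Subset.trans Finset.subset_union_right Finset.subset_union_left
    have hST : ∀ n, S ⊆ T n := fun n =>
      Finset.Subset.trans Finset.subset_union_left Finset.subset_union_left
    set e : ℕ → X → ℝ := fun n => equil b Ω (T n) with he
    have hbddA : ∀ x, BddAbove (Set.range fun n => e n x) := by
      intro x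
      refine ⟨1, ?_⟩
      rintro r ⟨n, rfl⟩
      exact equil_le_one b hb_nonneg hb_row hdeg_pos Ω (T n) x
    set ee : X → ℝ := fun x => ⨆ n, e n x with hee
    have hmono : ∀ x, Monotone fun n => e n x := fun x =>
      monotone_nat_of_le_succ fun n =>
        equil_mono_T b hb_nonneg hb_row hdeg_pos Ω (hTsub (Nat.le_succ n)) x
    have htd : ∀ x, Filter.Tendsto (fun n => e n x) Filter.atTop (nhds (ee x)) :=
      fun x => tendsto_atTop_ciSup (hmono x) (hbddA x)
    have hee0 : ∀ x, 0 ≤ ee x := fun x =>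
      le_trans (equil_nonneg b hb_nonneg hb_row hdeg_pos Ω (T 0) x)
        (le_ciSup (hbddA x) 0)
    have hee1 : ∀ x, ee x ≤ 1 := fun x =>
      ciSup_le fun n => equil_le_one b hb_nonneg hb_row hdeg_pos Ω (T n) x
    have heeΩ : ∀ x ∈ Ω, ee x = 1 := by
      intro x hx
      have : (fun n => e n x) = fun _ => (1 : ℝ) :=
        funext fun n => equil_of_mem b Ω (T n) hx
      rw [hee]
      simp only [this]
      exact ciSup_const
    have hbee : ∀ x, Summable fun y => b x y * ee y :=
      fun x => sum_b_mul b hb_nonneg hb_row hee0 hee1 x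
    have hharm : ∀ x ∉ Ω, ee x * (∑' y, b x y) = ∑' y, b x y * ee y := by
      intro x hxΩ
      obtain ⟨k, hk⟩ := henum x
      have hxT : ∀ n, k ≤ n → x ∈ T n := by
        intro n hn
        refine Finset.mem_union_right _ ?_
        exact Finset.mem_image.mpr ⟨k, Finset.mem_range.mpr (by omega), hk⟩
      have hfix : ∀ n ≥ k, e n x * (∑' y, b x y) = ∑' y, b x y * e n y := fun n hn =>
        equil_fix b hb_nonneg hb_row hdeg_pos Ω (T n) hxΩ (hxT n hn)
      have hL : Filter.Tendsto (fun n => e n x * (∑' y, b x y)) Filter.atTop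
          (nhds (ee x * ∑' y, b x y)) := (htd x).mul_const _
      have hR : Filter.Tendsto (fun n => ∑' y, b x y * e n y) Filter.atTop
          (nhds (∑' y, b x y * ee y)) := by
        refine tendsto_tsum_of_dominated_convergence (bound := fun y => b x y) (hb_row x)
          (fun y => (htd y).const_mul _) ?_
        filter_upwards with n y
        rw [Real.norm_eq_abs, abs_of_nonneg (mul_nonneg (hb_nonneg x y)
          (equil_nonneg b hb_nonneg hb_row hdeg_pos Ω (T n) y))]
        have h1 : b x y * e n y ≤ b x y * 1 := mul_le_mul_of_nonneg_left
          (equil_le_one b hb_nonneg hb_row hdeg_pos Ω (T n) y) (hb_nonneg x y)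
        simpa using h1
      have hLR : Filter.Tendsto (fun n => ∑' y, b x y * e n y) Filter.atTop
          (nhds (ee x * ∑' y, b x y)) := by
        refine hL.congr' ?_
        filter_upwards [Filter.eventually_atTop.mpr ⟨k, hfix⟩] with n hn
        exact hn
      exact tendsto_nhds_unique hLR hR
    -- comparison function
    set h : X → ℝ := fun z => if z ∈ Ω then g z else min (g z) (C * ee z) with hhdef
    have hhle : ∀ z, h z ≤ g z := by
      intro z
      by_cases hz : z ∈ Ω
      · simp [h, hz]
      · simp only [h, hz, if_false]
        exact min_le_left _ _
    have hh0 : ∀ z, 0 ≤ h z := by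
      intro z
      by_cases hz : z ∈ Ω
      · simp [h, hz, hg_nonneg z]
      · simp only [h, hz, if_false, le_min_iff]
        exact ⟨hg_nonneg z, mul_nonneg hC0 (hee0 z)⟩
    have hhF : ∀ x, Summable fun y => b x y * h y := by
      intro x
      refine Summable.of_nonneg_of_le (fun y => mul_nonneg (hb_nonneg x y) (hh0 y))
        (fun y => mul_le_mul_of_nonneg_left (hhle y) (hb_nonneg x y)) (hgF x)
    have hbh : ∀ x, Summable fun y => b x y * (h x - h y) := by
      intro x
      exact Summable.congr (((hb_row x).mul_right (h x)).sub (hhF x)) fun y => by ring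
    have hsuper : ∀ x, (if x = o then 1 else 0 : ℝ) ≤ ∑' y, b x y * (h x - h y) := by
      intro x
      have caseA : h x = g x → (if x = o then 1 else 0 : ℝ) ≤ ∑' y, b x y * (h x - h y) := by
        intro hxval
        calc (if x = o then 1 else 0 : ℝ) = ∑' y, b x y * (g x - g y) := (hg_eq x).symm
          _ ≤ ∑' y, b x y * (g x - h y) := by
              refine Summable.tsum_le_tsum (fun y => mul_le_mul_of_nonneg_left
                (by linarith [hhle y]) (hb_nonneg x y)) (hbg x) ?_
              exact Summable.congr (((hb_row x).mul_right (g x)).sub (hhF x))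
                fun y => by ring
          _ = ∑' y, b x y * (h x - h y) := by rw [hxval]
      by_cases hxΩ : x ∈ Ω
      · exact caseA (by simp [h, hxΩ])
      · rcases le_total (g x) (C * ee x) with hmin | hmin
        · exact caseA (by simp only [h, hxΩ, if_false]; exact min_eq_left hmin)
        · -- h x = C * ee x
          have hxval : h x = C * ee x := by
            simp only [h, hxΩ, if_false]; exact min_eq_right hmin
          have hxo : x ≠ o := fun hc => hxΩ (hc ▸ hoΩ)
          rw [if_neg hxo]
          have hbeex : Summable fun y => b x y * (C * ee x - C * ee y) := by
            refine Summable.congr (((hb_row x).mul_right (C * ee x)).sub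
              ((hbee x).mul_left C)) fun y => by ring
          have hterm : ∀ y, b x y * (C * ee x - C * ee y) ≤ b x y * (h x - h y) := by
            intro y
            by_cases hb0 : b x y = 0
            · rw [hb0]; simp
            · have hbpos : 0 < b x y := lt_of_le_of_ne (hb_nonneg x y) (Ne.symm hb0)
              have hyle : h y ≤ C * ee y := by
                by_cases hyΩ : y ∈ Ω
                · have hgy : g y ≤ C := hC_bound y hyΩ
                    ⟨x, by rw [hb_symm y x]; exact hbpos, hxΩ⟩
                  have : h y = g y := by simp [h, hyΩ]
                  rw [this, heeΩ y hyΩ, mul_one]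
                  exact hgy
                · simp only [h, hyΩ, if_false]
                  exact min_le_right _ _
              refine mul_le_mul_of_nonneg_left ?_ (le_of_lt hbpos)
              rw [hxval]
              linarith
          have hzero : ∑' y, b x y * (C * ee x - C * ee y) = 0 := by
            have h1 : (fun y => b x y * (C * ee x - C * ee y)) =
                fun y => C * (b x y * (ee x - ee y)) := funext fun y => by ring
            rw [h1, tsum_mul_left]
            rw [lap_eq b hb_row ee x (hbee x)]
            rw [hharm x hxΩ]
            ring
          calc (0 : ℝ) = ∑' y, b x y * (C * ee x - C * ee y) := hzero.symm
            _ ≤ ∑' y, b x y * (h x - h y) := Summable.tsum_le_tsum hterm hbeex (hbh x)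
    have hgh : ∀ z, g z ≤ h z :=
      green_comparison b hb_nonneg hb_row hdeg_pos o g hg_min h hh0 hhF hsuper
    have hgCe : ∀ z, z ∉ Ω → g z ≤ C * ee z := by
      intro z hz
      have := hgh z
      simp only [h, hz, if_false] at this
      exact this.trans (min_le_right _ _)
    -- finite-sum estimate
    have hptle : ∀ x ∈ s, (if x ∈ Ω then 0 else g x ^ 2 * m x) ≤ C ^ 2 * ee x ^ 2 * m x := by
      intro x _
      by_cases hx : x ∈ Ω
      · simp only [hx, if_true]
        have : 0 ≤ C ^ 2 * ee x ^ 2 * m x :=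
          mul_nonneg (mul_nonneg (sq_nonneg C) (sq_nonneg _)) (le_of_lt (hm_pos x))
        linarith
      · simp only [hx, if_false]
        refine mul_le_mul_of_nonneg_right ?_ (le_of_lt (hm_pos x))
        calc g x ^ 2 ≤ (C * ee x) ^ 2 :=
            pow_le_pow_left₀ (hg_nonneg x) (hgCe x hx) 2
          _ = C ^ 2 * ee x ^ 2 := by ring
    have hsum1 : (∑ x ∈ s, if x ∈ Ω then 0 else g x ^ 2 * m x) ≤
        ∑ x ∈ s, C ^ 2 * ee x ^ 2 * m x := Finset.sum_le_sum hptle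
    have hlim : Filter.Tendsto (fun n => ∑ x ∈ s, C ^ 2 * e n x ^ 2 * m x) Filter.atTop
        (nhds (∑ x ∈ s, C ^ 2 * ee x ^ 2 * m x)) := by
      refine tendsto_finset_sum _ fun x _ => ?_
      exact (((htd x).pow 2).const_mul (C ^ 2)).mul_const (m x)
    have hbound : ∀ n, ∑ x ∈ s, C ^ 2 * e n x ^ 2 * m x ≤ C ^ 2 / lam * energyForm b φ := by
      intro n
      have hesupp : (Function.support (e n)).Finite := by
        refine Set.Finite.subset (Ω ∪ T n).finite_toSet ?_
        intro x hx
        simp only [Function.mem_support] at hx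
        by_contra hc
        simp only [Finset.coe_union, Set.mem_union, Finset.mem_coe, not_or] at hc
        exact hx (equil_of_not_mem b Ω (T n) hc.1 hc.2)
      have hlam' := hlam (e n) hesupp
      have hQ : energyForm b (e n) ≤ energyForm b φ := by
        refine equil_energy_le b hb_nonneg hb_symm hb_row hdeg_pos Ω (T n) (hΩT n) φ
          (fun x hx => ?_) hφΩ
        by_contra hc
        exact hx (hST n (hS ▸ hφfin.mem_toFinset.mpr hc))
      have hsumm : Summable fun x => e n x ^ 2 * m x := by
        refine summable_of_finite_support (Set.Finite.subset hesupp ?_)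
        intro x hx
        simp only [Function.mem_support] at hx ⊢
        intro hc
        exact hx (by rw [hc]; ring)
      have hple : ∑ x ∈ s, e n x ^ 2 * m x ≤ ∑' x, e n x ^ 2 * m x :=
        Summable.sum_le_tsum s (fun x _ => mul_nonneg (sq_nonneg _) (le_of_lt (hm_pos x))) hsumm
      have h2 : ∑' x, e n x ^ 2 * m x ≤ energyForm b φ / lam := by
        rw [le_div_iff₀ hlam_pos]
        calc (∑' x, e n x ^ 2 * m x) * lam = lam * ∑' x, e n x ^ 2 * m x := by ring
          _ ≤ energyForm b (e n) := hlam'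
          _ ≤ energyForm b φ := hQ
      calc ∑ x ∈ s, C ^ 2 * e n x ^ 2 * m x
          = C ^ 2 * ∑ x ∈ s, e n x ^ 2 * m x := by
            rw [Finset.mul_sum]; exact Finset.sum_congr rfl fun x _ => by ring
        _ ≤ C ^ 2 * (energyForm b φ / lam) := by
            refine mul_le_mul_of_nonneg_left (hple.trans h2) (sq_nonneg C)
        _ = C ^ 2 / lam * energyForm b φ := by ring
    exact hsum1.trans (le_of_tendsto hlim (Filter.Eventually.of_forall hbound))
  -- pass to the infimum
  have hfinal : ∀ s : Finset X,
      (∑ x ∈ s, if x ∈ Ω then 0 else g x ^ 2 * m x) ≤ C ^ 2 / lam * graphCap b Ω := by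
    intro s
    set a : ℝ := ∑ x ∈ s, if x ∈ Ω then 0 else g x ^ 2 * m x with ha
    set c : ℝ := C ^ 2 / lam with hc
    have hc0 : 0 ≤ c := div_nonneg (sq_nonneg C) (le_of_lt hlam_pos)
    rcases eq_or_lt_of_le hc0 with hceq | hcpos
    · obtain ⟨q0, hq0⟩ := hcap_ne
      have := key q0 hq0 s
      rw [← hceq] at this ⊢
      simpa using this
    · have hdivle : ∀ q ∈ capset, a / c ≤ q := by
        intro q hq
        rw [div_le_iff₀ hcpos]
        exact (key q hq s).trans (le_of_eq (mul_comm c q))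
      have h1 : a / c ≤ sInf capset := le_csInf hcap_ne hdivle
      rw [hcap_def]
      calc a = a / c * c := by field_simp
        _ ≤ sInf capset * c := mul_le_mul_of_nonneg_right h1 (le_of_lt hcpos)
        _ = c * sInf capset := by ring
  have hnn : ∀ x, 0 ≤ (if x ∈ Ω then 0 else g x ^ 2 * m x) := by
    intro x
    by_cases hx : x ∈ Ω
    · simp [hx]
    · simp only [hx, if_false]
      exact mul_nonneg (sq_nonneg _) (le_of_lt (hm_pos x))
  constructor
  · rw [ENNReal.tsum_eq_iSup_sum]
    refine iSup_le fun s => ?_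
    rw [← ENNReal.ofReal_sum_of_nonneg (fun x _ => hnn x)]
    exact ENNReal.ofReal_le_ofReal (hfinal s)
  · have h1 : Summable fun x => (if x ∈ Ω then 0 else g x ^ 2 * m x) :=
      summable_of_sum_le hnn hfinal
    have h2 : Summable fun x => (if x ∈ Ω then g x ^ 2 * m x else 0) := by
      refine summable_of_finite_support (Set.Finite.subset Ω.finite_toSet ?_)
      intro x hx
      simp only [Function.mem_support, Finset.mem_coe] at hx ⊢
      by_contra hc
      exact hx (if_neg hc)
    refine Summable.congr (h1.add h2) fun x => ?_
    by_cases hx : x ∈ Ω <;> simp [hx]
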